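/- Let Y be a linear subspace of ℂ² (with the standard hermitian inner product) and K a complex 2×2 matrix. Let u : [0,1] → ℂ be twice continuously differentiable with K·Γ₁u − Γ₂u ∈ Y^⊥, and let h ∈ L²((0,1),ℂ) with Γ₁h ∈ Y. Then the weak-formulation identity holds: ∫₀¹ u(x)·conj(h(x))dx + (K·Γ₁u | Γ₁h)_{ℂ²} = ∫₀¹ P(−u″)(x)·conj(Ph(x))dx + μ₀(−u″)·conj(μ₀(h)); i.e., the form a_K applied to (u,h) equals the H⁻¹(T)-type inner product of −u″ with h. -/

import Mathlib

open MeasureTheory intervalIntegral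

/-- `𝓘g(x) = ∫₀ˣ g(y) dy` -/
noncomputable def Iprim (g : ℝ → ℂ) (x : ℝ) : ℂ := ∫ y in (0:ℝ)..x, g y

/-- `Pg(x) = 𝓘g(x) − ∫₀¹ 𝓘g(z) dz` -/
noncomputable def Pfun (g : ℝ → ℂ) (x : ℝ) : ℂ := Iprim g x - ∫ z in (0:ℝ)..1, Iprim g z

/-- `μ₀(g) = ∫₀¹ g(x) dx` -/
noncomputable def mu0 (g : ℝ → ℂ) : ℂ := ∫ x in (0:ℝ)..1, g x

/-- `μ₁(g) = ∫₀¹ (1−x) g(x) dx` -/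
noncomputable def mu1 (g : ℝ → ℂ) : ℂ := ∫ x in (0:ℝ)..1, ((1 - x : ℝ) : ℂ) * g x

/-- `Γ₁u = (μ₀(u), μ₁(u)) ∈ ℂ²` -/
noncomputable def Gamma1 (u : ℝ → ℂ) : Fin 2 → ℂ := ![mu0 u, mu1 u]

/-- identification of `Fin 2 → ℂ` with the hermitian space `ℂ²` -/
noncomputable def toE2 (v : Fin 2 → ℂ) : EuclideanSpace ℂ (Fin 2) :=
  (WithLp.equiv 2 (Fin 2 → ℂ)).symm v

lemma ftc01 (v v' : ℝ → ℂ)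
    (hv : ∀ x ∈ Set.Icc (0:ℝ) 1, HasDerivWithinAt v (v' x) (Set.Icc (0:ℝ) 1) x)
    (hc : ContinuousOn v' (Set.Icc (0:ℝ) 1)) {a b : ℝ}
    (ha : 0 ≤ a) (hab : a ≤ b) (hb : b ≤ 1) :
    ∫ x in a..b, v' x = v b - v a := by
  have hsub : Set.Icc a b ⊆ Set.Icc 0 1 := Set.Icc_subset_Icc ha hb
  apply intervalIntegral.integral_eq_sub_of_hasDeriv_right_of_le hab
  · exact ContinuousOn.mono (fun x hx => (hv x hx).continuousWithinAt) hsub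
  · intro x hx
    refine (hv x (hsub (Set.Ioo_subset_Icc_self hx))).mono_of_mem_nhdsWithin ?_
    refine Filter.mem_of_superset (Ioo_mem_nhdsGT_of_mem ⟨le_refl x, lt_of_lt_of_le hx.2 hb⟩) ?_
    exact fun y hy => ⟨le_of_lt (lt_of_le_of_lt (ha.trans hx.1.le) hy.1), hy.2.le⟩
  · rw [← Set.uIcc_of_le hab] at hsub
    exact (hc.mono hsub).intervalIntegrable

lemma triangle_swap (F g : ℝ → ℂ) {C : ℝ} (hC : 0 ≤ C)
    (hF : AEStronglyMeasurable F (volume.restrict (Set.Ioo (0:ℝ) 1)))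
    (hFb : ∀ x ∈ Set.Ioo (0:ℝ) 1, ‖F x‖ ≤ C)
    (hg : IntegrableOn g (Set.Ioo (0:ℝ) 1)) :
    ∫ x in Set.Ioo (0:ℝ) 1, F x * ∫ y in Set.Ioo (0:ℝ) x, g y =
      ∫ y in Set.Ioo (0:ℝ) 1, (∫ x in Set.Ioo y 1, F x) * g y := by
  set μI := volume.restrict (Set.Ioo (0:ℝ) 1) with hμI
  have hIoo : MeasurableSet (Set.Ioo (0:ℝ) 1) := measurableSet_Ioo
  set φ : ℝ → ℝ → ℂ := fun x y => if y < x then F x * g y else 0 with hφ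
  have hmes : AEStronglyMeasurable (Function.uncurry φ) (μI.prod μI) := by
    have h1 : AEStronglyMeasurable (fun p : ℝ × ℝ => F p.1 * g p.2) (μI.prod μI) :=
      (hF.comp_quasiMeasurePreserving Measure.quasiMeasurePreserving_fst).mul
        (hg.aestronglyMeasurable.comp_quasiMeasurePreserving Measure.quasiMeasurePreserving_snd)
    have hset : MeasurableSet {p : ℝ × ℝ | p.2 < p.1} :=
      measurableSet_lt measurable_snd measurable_fst
    have : Function.uncurry φ = Set.indicator {p : ℝ × ℝ | p.2 < p.1}
        (fun p : ℝ × ℝ => F p.1 * g p.2) := by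
      funext p
      simp only [Function.uncurry, hφ, Set.indicator_apply, Set.mem_setOf_eq]
    rw [this]
    exact h1.indicator hset
  have hint : Integrable (Function.uncurry φ) (μI.prod μI) := by
    refine Integrable.mono' ((integrable_const C).mul_prod hg.norm) hmes ?_
    have hprod : μI.prod μI = (volume.prod volume).restrict
        ((Set.Ioo (0:ℝ) 1) ×ˢ (Set.Ioo (0:ℝ) 1)) := Measure.prod_restrict _ _
    rw [hprod]
    filter_upwards [ae_restrict_mem (hIoo.prod hIoo)] with p hp
    rcases hp with ⟨hp1, hp2⟩
    simp only [Function.uncurry, hφ]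
    by_cases hlt : p.2 < p.1
    · simp only [if_pos hlt]
      calc ‖F p.1 * g p.2‖ = ‖F p.1‖ * ‖g p.2‖ := norm_mul _ _
        _ ≤ C * ‖g p.2‖ := mul_le_mul_of_nonneg_right (hFb _ hp1) (norm_nonneg _)
    · simp only [if_neg hlt, norm_zero]
      positivity
  have hswap := integral_integral_swap hint
  calc ∫ x in Set.Ioo (0:ℝ) 1, F x * ∫ y in Set.Ioo (0:ℝ) x, g y
      = ∫ x, ∫ y, φ x y ∂μI ∂μI := by
        refine (setIntegral_congr_fun hIoo fun x hx => ?_).symm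
        have heq : (fun y => φ x y) = Set.indicator (Set.Iio x) (fun y => F x * g y) := by
          funext y; simp only [hφ, Set.indicator_apply, Set.mem_Iio]
        rw [heq, hμI, MeasureTheory.integral_indicator measurableSet_Iio,
          Measure.restrict_restrict measurableSet_Iio]
        have : Set.Iio x ∩ Set.Ioo (0:ℝ) 1 = Set.Ioo (0:ℝ) x := by
          ext y
          constructor
          · rintro ⟨h1, h2, _⟩; exact ⟨h2, h1⟩
          · rintro ⟨h1, h2⟩; exact ⟨h2, h1, h2.trans hx.2⟩
        rw [this, MeasureTheory.integral_const_mul]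
    _ = ∫ y, ∫ x, φ x y ∂μI ∂μI := hswap
    _ = ∫ y in Set.Ioo (0:ℝ) 1, (∫ x in Set.Ioo y 1, F x) * g y := by
        refine setIntegral_congr_fun hIoo fun y hy => ?_
        have heq : (fun x => φ x y) = Set.indicator (Set.Ioi y) (fun x => F x * g y) := by
          funext x; simp only [hφ, Set.indicator_apply, Set.mem_Ioi]
        rw [heq, hμI, MeasureTheory.integral_indicator measurableSet_Ioi,
          Measure.restrict_restrict measurableSet_Ioi]
        have : Set.Ioi y ∩ Set.Ioo (0:ℝ) 1 = Set.Ioo y 1 := by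
          ext x
          constructor
          · rintro ⟨h1, _, h2⟩; exact ⟨h1, h2⟩
          · rintro ⟨h1, h2⟩; exact ⟨h1, hy.1.trans h1, h2⟩
        rw [this, MeasureTheory.integral_mul_const]

lemma orth_step (Y : Submodule ℂ (EuclideanSpace ℂ (Fin 2))) (a b : Fin 2 → ℂ)
    (ha : toE2 a ∈ Yᗮ) (hb : toE2 b ∈ Y) :
    ∑ i : Fin 2, a i * (starRingEnd ℂ) (b i) = 0 := by
  have h0 : (inner ℂ (toE2 a) (toE2 b) : ℂ) = 0 :=
    Submodule.inner_left_of_mem_orthogonal hb ha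
  rw [PiLp.inner_apply] at h0
  have h1 : ∑ i : Fin 2, (starRingEnd ℂ) (a i) * b i = 0 := by
    simpa [toE2, RCLike.inner_apply, mul_comm] using h0
  calc ∑ i : Fin 2, a i * (starRingEnd ℂ) (b i)
      = (starRingEnd ℂ) (∑ i : Fin 2, (starRingEnd ℂ) (a i) * b i) := by
        rw [map_sum]; congr 1; funext i; simp [mul_comm]
    _ = 0 := by rw [h1]; simp

/-- Weak formulation identity: if `u` is twice continuously differentiable on `[0,1]` with
`K Γ₁u − Γ₂u ∈ Y^⊥` and `h ∈ L²` with `Γ₁h ∈ Y`, then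
`∫₀¹ u conj(h) + (K Γ₁u | Γ₁h)_{ℂ²} = (−u″ | h)₋₁`. -/
theorem stmt12 (Y : Submodule ℂ (EuclideanSpace ℂ (Fin 2)))
    (K : Matrix (Fin 2) (Fin 2) ℂ)
    (u u' u'' : ℝ → ℂ)
    (hu' : ∀ x ∈ Set.Icc (0:ℝ) 1, HasDerivWithinAt u (u' x) (Set.Icc (0:ℝ) 1) x)
    (hu'' : ∀ x ∈ Set.Icc (0:ℝ) 1, HasDerivWithinAt u' (u'' x) (Set.Icc (0:ℝ) 1) x)
    (hcont : ContinuousOn u'' (Set.Icc (0:ℝ) 1))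
    (hYperp : toE2 (K.mulVec (Gamma1 u) - ![-(mu0 u'') - u 1, u 1 - u 0]) ∈ Yᗮ)
    (h : ℝ → ℂ)
    (hh : MemLp h 2 (volume.restrict (Set.Ioo (0:ℝ) 1)))
    (hhY : toE2 (Gamma1 h) ∈ Y) :
    (∫ x in (0:ℝ)..1, u x * (starRingEnd ℂ) (h x)) +
        (∑ i : Fin 2, K.mulVec (Gamma1 u) i * (starRingEnd ℂ) (Gamma1 h i)) =
      (∫ x in (0:ℝ)..1, Pfun (fun y => -(u'' y)) x * (starRingEnd ℂ) (Pfun h x)) +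
        mu0 (fun y => -(u'' y)) * (starRingEnd ℂ) (mu0 h) := by
  have hIoo : MeasurableSet (Set.Ioo (0:ℝ) 1) := measurableSet_Ioo
  have hconv : ∀ φ : ℝ → ℂ, (∫ x in (0:ℝ)..1, φ x) = ∫ x in Set.Ioo (0:ℝ) 1, φ x := by
    intro φ
    rw [intervalIntegral.integral_of_le zero_le_one, MeasureTheory.integral_Ioc_eq_integral_Ioo]
  have hcu' : ContinuousOn u' (Set.Icc 0 1) := fun x hx => (hu'' x hx).continuousWithinAt
  have hcu : ContinuousOn u (Set.Icc 0 1) := fun x hx => (hu' x hx).continuousWithinAt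
  haveI : IsFiniteMeasure (volume.restrict (Set.Ioo (0:ℝ) 1)) :=
    ⟨by rw [Measure.restrict_apply_univ]; simp [Real.volume_Ioo]⟩
  have hgint : IntegrableOn h (Set.Ioo (0:ℝ) 1) volume := hh.integrable one_le_two
  have hgc : IntegrableOn (fun y => (starRingEnd ℂ) (h y)) (Set.Ioo (0:ℝ) 1) volume := by
    refine Integrable.mono' hgint.norm
      (RCLike.continuous_conj.comp_aestronglyMeasurable hgint.aestronglyMeasurable) ?_
    filter_upwards with y
    simp
  -- F and G
  set F : ℝ → ℂ := fun x => (u 1 - u 0) - u' x with hFdef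
  have hFcont : ContinuousOn F (Set.Icc 0 1) := continuousOn_const.sub hcu'
  set G : ℝ → ℂ := fun x => (u 1 - u 0) * (x:ℂ) - u x with hGdef
  have hGd : ∀ x ∈ Set.Icc (0:ℝ) 1, HasDerivWithinAt G (F x) (Set.Icc 0 1) x := by
    intro x hx
    have h1 : HasDerivWithinAt (fun y : ℝ => ((y:ℂ))) 1 (Set.Icc 0 1) x := by
      exact (Complex.ofRealCLM.hasDerivAt (x := x)).hasDerivWithinAt
    have h2 := (h1.const_mul (u 1 - u 0)).sub (hu' x hx)
    convert h2 using 1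
    · rfl
    · funext y; simp [hGdef]
    · simp [hFdef]
  -- FTC consequences
  have hPf : ∀ x ∈ Set.Icc (0:ℝ) 1, Pfun (fun y => -(u'' y)) x = F x := by
    intro x hx
    have hIf : ∀ z ∈ Set.Icc (0:ℝ) 1, Iprim (fun y => -(u'' y)) z = u' 0 - u' z := by
      intro z hz
      rw [Iprim, intervalIntegral.integral_neg, ftc01 u' u'' hu'' hcont le_rfl hz.1 hz.2]
      ring
    have hInt1 : (∫ z in (0:ℝ)..1, Iprim (fun y => -(u'' y)) z) = u' 0 - (u 1 - u 0) := by
      rw [intervalIntegral.integral_congr (g := fun z => u' 0 - u' z)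
        (by rw [Set.uIcc_of_le zero_le_one]; exact fun z hz => hIf z hz)]
      rw [intervalIntegral.integral_sub intervalIntegrable_const
        (by rw [← Set.uIcc_of_le (zero_le_one (α := ℝ))] at hcu'
            exact hcu'.intervalIntegrable)]
      rw [intervalIntegral.integral_const, ftc01 u u' hu' hcu' le_rfl zero_le_one le_rfl]
      simp
    rw [Pfun, hIf x hx, hInt1, hFdef]
    ring
  have hGF : ∀ y ∈ Set.Icc (0:ℝ) 1, (∫ x in Set.Ioo y 1, F x) = G 1 - G y := by
    intro y hy
    rw [← MeasureTheory.integral_Ioc_eq_integral_Ioo, ← intervalIntegral.integral_of_le hy.2]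
    exact ftc01 G F hGd hFcont hy.1 hy.2 le_rfl
  have hF0 : (∫ x in (0:ℝ)..1, F x) = 0 := by
    rw [ftc01 G F hGd hFcont le_rfl zero_le_one le_rfl, hGdef]
    simp

  -- integrability facts
  have hIsub : Set.Ioo (0:ℝ) 1 ⊆ Set.Icc 0 1 := Set.Ioo_subset_Icc_self
  obtain ⟨Cu, hCu⟩ := isCompact_Icc.exists_bound_of_continuousOn hcu
  have hbu : IntegrableOn (fun y => u y * (starRingEnd ℂ) (h y)) (Set.Ioo (0:ℝ) 1) volume := by
    refine hgc.bdd_mul (c := Cu) ((hcu.mono hIsub).aestronglyMeasurable hIoo) ?_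
    filter_upwards [ae_restrict_mem hIoo] with y hy
    exact hCu y (hIsub hy)
  have hb1 : IntegrableOn (fun y => ((y:ℝ):ℂ) * (starRingEnd ℂ) (h y))
      (Set.Ioo (0:ℝ) 1) volume := by
    refine hgc.bdd_mul (c := 1) (Complex.continuous_ofReal.aestronglyMeasurable) ?_
    filter_upwards [ae_restrict_mem hIoo] with y hy
    rw [Complex.norm_real, Real.norm_eq_abs, abs_of_nonneg hy.1.le]
    exact hy.2.le
  have hb2 : IntegrableOn (fun y => ((1 - y:ℝ):ℂ) * (starRingEnd ℂ) (h y))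
      (Set.Ioo (0:ℝ) 1) volume := by
    refine hgc.bdd_mul (c := 1)
      ((Complex.continuous_ofReal.comp (continuous_const.sub continuous_id)).aestronglyMeasurable) ?_
    filter_upwards [ae_restrict_mem hIoo] with y hy
    rw [Complex.norm_real, Real.norm_eq_abs, abs_of_nonneg (by linarith [hy.2])]
    linarith [hy.1]
  -- key constants
  set A0 : ℂ := (starRingEnd ℂ) (mu0 h) with hA0def
  set A1 : ℂ := (starRingEnd ℂ) (mu1 h) with hA1def
  set J : ℂ := ∫ y in Set.Ioo (0:ℝ) 1, ((y:ℝ):ℂ) * (starRingEnd ℂ) (h y) with hJdef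
  have hA0 : (∫ y in Set.Ioo (0:ℝ) 1, (starRingEnd ℂ) (h y)) = A0 := by
    rw [hA0def, mu0, hconv, ← integral_conj]
  have hA1 : (∫ y in Set.Ioo (0:ℝ) 1, ((1 - y:ℝ):ℂ) * (starRingEnd ℂ) (h y)) = A1 := by
    rw [hA1def, mu1, hconv, ← integral_conj]
    refine setIntegral_congr_fun hIoo fun y _ => ?_
    rw [map_mul, Complex.conj_ofReal]
  have hJ : J = A0 - A1 := by
    have hadd := MeasureTheory.integral_add hb1 hb2
    have hcongr : (∫ y in Set.Ioo (0:ℝ) 1,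
        (((y:ℝ):ℂ) * (starRingEnd ℂ) (h y) + ((1 - y:ℝ):ℂ) * (starRingEnd ℂ) (h y))) =
        ∫ y in Set.Ioo (0:ℝ) 1, (starRingEnd ℂ) (h y) := by
      refine setIntegral_congr_fun hIoo fun y _ => ?_
      push_cast
      ring
    rw [hcongr] at hadd
    rw [hJdef]
    rw [hA0] at hadd
    rw [← hA1]
    linear_combination -hadd
  -- orthogonality
  have horth := orth_step Y _ _ hYperp hhY
  have hK : (∑ i : Fin 2, K.mulVec (Gamma1 u) i * (starRingEnd ℂ) (Gamma1 h i)) =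
      (-(mu0 u'') - u 1) * A0 + (u 1 - u 0) * A1 := by
    simp only [Fin.sum_univ_two, Pi.sub_apply, Matrix.cons_val_zero, Matrix.cons_val_one,
      Matrix.head_cons, sub_mul, Gamma1] at horth ⊢
    rw [hA0def, hA1def]
    linear_combination horth
  -- continuity of the primitive of h
  have hIcc : IntegrableOn h (Set.Icc (0:ℝ) 1) volume := by
    rwa [integrableOn_Icc_iff_integrableOn_Ioo]
  have hIprimCont : ContinuousOn (Iprim h) (Set.Icc (0:ℝ) 1) := by
    refine (intervalIntegral.continuousOn_primitive hIcc).congr fun x hx => ?_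
    simp only [Iprim]
    rw [intervalIntegral.integral_of_le hx.1]
  -- bound for F
  obtain ⟨CF, hCF⟩ := isCompact_Icc.exists_bound_of_continuousOn hFcont
  -- the main computation for the RHS integral
  set c : ℂ := ∫ z in (0:ℝ)..1, Iprim h z with hcdef
  have hint1 : IntervalIntegrable (fun x => F x * (starRingEnd ℂ) (Iprim h x)) volume 0 1 := by
    have : ContinuousOn (fun x => F x * (starRingEnd ℂ) (Iprim h x)) (Set.Icc (0:ℝ) 1) :=
      hFcont.mul (RCLike.continuous_conj.comp_continuousOn hIprimCont)
    rw [← Set.uIcc_of_le (zero_le_one (α := ℝ))] at this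
    exact this.intervalIntegrable
  have hint2 : IntervalIntegrable (fun x => F x * (starRingEnd ℂ) c) volume 0 1 := by
    have : ContinuousOn (fun x => F x * (starRingEnd ℂ) c) (Set.Icc (0:ℝ) 1) :=
      hFcont.mul continuousOn_const
    rw [← Set.uIcc_of_le (zero_le_one (α := ℝ))] at this
    exact this.intervalIntegrable
  have hR : (∫ x in (0:ℝ)..1, Pfun (fun y => -(u'' y)) x * (starRingEnd ℂ) (Pfun h x)) =
      (∫ y in Set.Ioo (0:ℝ) 1, u y * (starRingEnd ℂ) (h y)) - u 1 * J - u 0 * A1 := by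
    calc ∫ x in (0:ℝ)..1, Pfun (fun y => -(u'' y)) x * (starRingEnd ℂ) (Pfun h x)
        = ∫ x in (0:ℝ)..1, (F x * (starRingEnd ℂ) (Iprim h x) - F x * (starRingEnd ℂ) c) := by
          apply intervalIntegral.integral_congr
          rw [Set.uIcc_of_le (zero_le_one (α := ℝ))]
          intro x hx
          dsimp only
          rw [hPf x hx, Pfun, ← hcdef, map_sub, mul_sub]
      _ = (∫ x in (0:ℝ)..1, F x * (starRingEnd ℂ) (Iprim h x)) -
            (∫ x in (0:ℝ)..1, F x) * (starRingEnd ℂ) c := by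
          rw [intervalIntegral.integral_sub hint1 hint2, intervalIntegral.integral_mul_const]
      _ = ∫ x in Set.Ioo (0:ℝ) 1, F x * ∫ y in Set.Ioo (0:ℝ) x, (starRingEnd ℂ) (h y) := by
          rw [hF0, zero_mul, sub_zero, hconv]
          refine setIntegral_congr_fun hIoo fun x hx => ?_
          congr 1
          rw [Iprim, intervalIntegral.integral_of_le hx.1.le,
            MeasureTheory.integral_Ioc_eq_integral_Ioo, ← integral_conj]
      _ = ∫ y in Set.Ioo (0:ℝ) 1, (∫ x in Set.Ioo y 1, F x) * (starRingEnd ℂ) (h y) := by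
          refine triangle_swap F _ (le_max_right CF 0)
            ((hFcont.mono hIsub).aestronglyMeasurable hIoo)
            (fun x hx => (hCF x (hIsub hx)).trans (le_max_left _ _)) hgc
      _ = ∫ y in Set.Ioo (0:ℝ) 1, (u y * (starRingEnd ℂ) (h y) -
            u 1 * (((y:ℝ):ℂ) * (starRingEnd ℂ) (h y)) -
            u 0 * (((1 - y:ℝ):ℂ) * (starRingEnd ℂ) (h y))) := by
          refine setIntegral_congr_fun hIoo fun y hy => ?_
          rw [hGF y (hIsub hy), hGdef]
          push_cast
          ring
      _ = (∫ y in Set.Ioo (0:ℝ) 1, u y * (starRingEnd ℂ) (h y)) - u 1 * J - u 0 * A1 := by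
          have i1 : IntegrableOn (fun y => u y * (starRingEnd ℂ) (h y) -
              u 1 * (((y:ℝ):ℂ) * (starRingEnd ℂ) (h y))) (Set.Ioo (0:ℝ) 1) volume :=
            hbu.sub (hb1.const_mul (u 1))
          have i2 : IntegrableOn (fun y => u 0 * (((1 - y:ℝ):ℂ) * (starRingEnd ℂ) (h y)))
              (Set.Ioo (0:ℝ) 1) volume := hb2.const_mul (u 0)
          have i3 : IntegrableOn (fun y => u 1 * (((y:ℝ):ℂ) * (starRingEnd ℂ) (h y)))
              (Set.Ioo (0:ℝ) 1) volume := hb1.const_mul (u 1)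
          rw [MeasureTheory.integral_sub i1 i2, MeasureTheory.integral_sub hbu i3,
            MeasureTheory.integral_const_mul, MeasureTheory.integral_const_mul, hJdef, hA1]
  have hmu0f : mu0 (fun y => -(u'' y)) = -(mu0 u'') := by
    rw [mu0, mu0, intervalIntegral.integral_neg]
  rw [hconv (fun x => u x * (starRingEnd ℂ) (h x)), hK, hR, hmu0f, hJ]
  ring
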